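/- arXiv:2111.04842 — 4 statements merged into one kernel-verified Lean document; each statement's English description precedes it below -/
import Mathlib

section
/- Let s > 0, m > 0, let n ≥ 1 be an integer, and let k = (k₁, k₂) ∈ 2πℤ² with −πn < k_i ≤ πn for i = 1,2. Then, with g_s(λ) = (1 − e^{−λ s})/λ − 1/(λ + 1/s) and κ = 4/π², the lattice Fourier coefficient of the covariance of X_s^h obeys the ε-uniform summable bound g_s( n² Σ_{i=1,2} (2 − 2cos(k_i/n)) + m² ) ≤ 1/( s · (κ |k|² + m²)² ), where |k|² = k₁² + k₂². -/
lemma cos_quad_bound {x : ℝ} (hx : |x| ≤ Real.pi) :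
    (4 / Real.pi ^ 2) * x ^ 2 ≤ 2 - 2 * Real.cos x := by
  have hpi := Real.pi_pos
  have hsinsq : Real.sin (x / 2) ^ 2 = 1 / 2 - Real.cos x / 2 := by
    have := Real.sin_sq_eq_half_sub (x / 2)
    rwa [show 2 * (x / 2) = x by ring] at this
  have hsq : Real.sin (|x| / 2) ^ 2 = Real.sin (x / 2) ^ 2 := by
    rcases abs_cases x with ⟨h, _⟩ | ⟨h, _⟩ <;> rw [h]
    rw [show -x / 2 = -(x / 2) by ring, Real.sin_neg, neg_pow]
    ring
  have key : (2 / Real.pi * (|x| / 2)) ^ 2 ≤ Real.sin (x / 2) ^ 2 := by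
    have h0 : 0 ≤ |x| / 2 := by positivity
    have h1 : |x| / 2 ≤ Real.pi / 2 := by linarith
    have hj : 2 / Real.pi * (|x| / 2) ≤ Real.sin (|x| / 2) := Real.mul_le_sin h0 h1
    have hnn : 0 ≤ 2 / Real.pi * (|x| / 2) := by positivity
    calc (2 / Real.pi * (|x| / 2)) ^ 2 ≤ Real.sin (|x| / 2) ^ 2 := pow_le_pow_left₀ hnn hj 2
      _ = Real.sin (x / 2) ^ 2 := hsq
  have habs : (2 / Real.pi * (|x| / 2)) ^ 2 = x ^ 2 / Real.pi ^ 2 := by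
    rw [mul_pow, div_pow, div_pow, sq_abs]; ring
  rw [habs, hsinsq] at key
  have hpi2 : (0:ℝ) < Real.pi ^ 2 := by positivity
  rw [div_le_iff₀ hpi2] at key
  rw [div_mul_eq_mul_div, div_le_iff₀ hpi2]
  nlinarith

/-- For `s > 0`, `m > 0`, `n ≥ 1` and a dual-lattice frequency `k = 2πj ∈ 2πℤ²` with
`−πn < kᵢ ≤ πn`, the lattice Fourier coefficient of the covariance of `X_s^h` obeys the
`ε`-uniform summable bound
`g_s(n² Σᵢ (2 − 2cos(kᵢ/n)) + m²) ≤ 1/(s (κ|k|² + m²)²)` with `κ = 4/π²`. -/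
theorem gs_lattice_fourier_coefficient_bound
    (s m : ℝ) (hs : 0 < s) (hm : 0 < m) (n : ℕ) (hn : 1 ≤ n)
    (j₁ j₂ : ℤ) (k₁ k₂ : ℝ) (hk₁ : k₁ = 2 * Real.pi * j₁) (hk₂ : k₂ = 2 * Real.pi * j₂)
    (hb₁ : -(Real.pi * n) < k₁ ∧ k₁ ≤ Real.pi * n)
    (hb₂ : -(Real.pi * n) < k₂ ∧ k₂ ≤ Real.pi * n) :
    let lam : ℝ := (n : ℝ) ^ 2 * ((2 - 2 * Real.cos (k₁ / n)) + (2 - 2 * Real.cos (k₂ / n)))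
      + m ^ 2
    (1 - Real.exp (-(lam * s))) / lam - 1 / (lam + 1 / s) ≤
      1 / (s * ((4 / Real.pi ^ 2) * (k₁ ^ 2 + k₂ ^ 2) + m ^ 2) ^ 2) := by
  intro lam
  have hpi := Real.pi_pos
  have hn0 : (0:ℝ) < (n:ℝ) := by exact_mod_cast Nat.pos_of_ne_zero (by omega)
  set μ : ℝ := (4 / Real.pi ^ 2) * (k₁ ^ 2 + k₂ ^ 2) + m ^ 2 with hμ
  have hμpos : 0 < μ := by positivity
  have habs₁ : |k₁ / n| ≤ Real.pi := by
    rw [abs_div, abs_of_pos hn0, div_le_iff₀ hn0]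
    rw [abs_le]; constructor <;> [linarith [hb₁.1]; linarith [hb₁.2]]
  have habs₂ : |k₂ / n| ≤ Real.pi := by
    rw [abs_div, abs_of_pos hn0, div_le_iff₀ hn0]
    rw [abs_le]; constructor <;> [linarith [hb₂.1]; linarith [hb₂.2]]
  have hc₁ := cos_quad_bound habs₁
  have hc₂ := cos_quad_bound habs₂
  have hn2 : (0:ℝ) < (n:ℝ) ^ 2 := by positivity
  have h₁ : (4 / Real.pi ^ 2) * k₁ ^ 2 ≤ (n:ℝ) ^ 2 * (2 - 2 * Real.cos (k₁ / n)) := by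
    rw [div_pow] at hc₁
    have := mul_le_mul_of_nonneg_left hc₁ hn2.le
    calc (4 / Real.pi ^ 2) * k₁ ^ 2
        = (n:ℝ) ^ 2 * (4 / Real.pi ^ 2 * (k₁ ^ 2 / (n:ℝ) ^ 2)) := by field_simp
      _ ≤ _ := this
  have h₂ : (4 / Real.pi ^ 2) * k₂ ^ 2 ≤ (n:ℝ) ^ 2 * (2 - 2 * Real.cos (k₂ / n)) := by
    rw [div_pow] at hc₂
    have := mul_le_mul_of_nonneg_left hc₂ hn2.le
    calc (4 / Real.pi ^ 2) * k₂ ^ 2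
        = (n:ℝ) ^ 2 * (4 / Real.pi ^ 2 * (k₂ ^ 2 / (n:ℝ) ^ 2)) := by field_simp
      _ ≤ _ := this
  have hlam_ge : μ ≤ lam := by
    show μ ≤ (n : ℝ) ^ 2 * ((2 - 2 * Real.cos (k₁ / n)) + (2 - 2 * Real.cos (k₂ / n))) + m ^ 2
    rw [hμ]
    nlinarith [h₁, h₂]
  have hlam_pos : 0 < lam := lt_of_lt_of_le hμpos hlam_ge
  have hls : 0 < lam + 1 / s := by positivity
  have step1 : (1 - Real.exp (-(lam * s))) / lam ≤ 1 / lam := by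
    gcongr
    linarith [Real.exp_pos (-(lam * s))]
  have step2 : 1 / lam - 1 / (lam + 1 / s) = 1 / s / (lam * (lam + 1 / s)) := by
    field_simp
    ring
  have hmm2 : μ * μ ≤ lam * (lam + 1 / s) := by
    have h2' : μ ≤ lam + 1 / s := by linarith [one_div_pos.mpr hs]
    exact mul_le_mul hlam_ge h2' hμpos.le hlam_pos.le
  have step3 : 1 / s / (lam * (lam + 1 / s)) ≤ 1 / s / (μ * μ) := by
    gcongr

  have step4 : 1 / s / (μ * μ) = 1 / (s * μ ^ 2) := by
    rw [sq]
    field_simp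
  calc (1 - Real.exp (-(lam * s))) / lam - 1 / (lam + 1 / s)
      ≤ 1 / lam - 1 / (lam + 1 / s) := by linarith
    _ = 1 / s / (lam * (lam + 1 / s)) := step2
    _ ≤ 1 / s / (μ * μ) := step3
    _ = 1 / (s * μ ^ 2) := step4
end

section
/- Fix s > 0 and m > 0, and let g_s(λ) = (1 − e^{−λ s})/λ − 1/(λ + 1/s) for λ > 0. For each integer n ≥ 1 define q̂ⁿ : ℤ² → ℝ by q̂ⁿ(j) = √( g_s( n² Σ_{i=1,2} (2 − 2cos(2π j_i / n)) + m² ) ) if −n/2 < j_i ≤ n/2 for i = 1,2, and q̂ⁿ(j) = 0 otherwise; and define q̂⁰ : ℤ² → ℝ by q̂⁰(j) = √( g_s( 4π²(j₁² + j₂²) + m² ) ). Then Σ_{j ∈ ℤ²} ( q̂ⁿ(j) − q̂⁰(j) )² → 0 as n → ∞. -/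
open Filter
open scoped Classical

private lemma aux_summable_int' {c : ℝ} (hc : 0 < c) :
    Summable (fun j : ℤ => 1 / ((j : ℝ) ^ 2 + c)) := by
  have h2 : Summable (fun j : ℤ => 1 / (j : ℝ) ^ 2 + if j = 0 then 1 / c else 0) := by
    refine (Real.summable_one_div_int_pow.2 one_lt_two).add ?_
    refine summable_of_ne_finset_zero (s := {0}) ?_
    intro j hj
    simp only [Finset.mem_singleton] at hj
    simp [hj]
  refine Summable.of_nonneg_of_le (fun j => by positivity) (fun j => ?_) h2
  rcases eq_or_ne j 0 with rfl | hj
  · simp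
  · have h1 : (1:ℝ) ≤ (j : ℝ) ^ 2 := by
      have : (1:ℤ) ≤ j ^ 2 := by
        rcases hj.lt_or_gt with h | h <;> nlinarith
      exact_mod_cast this
    have : 1 / ((j:ℝ)^2 + c) ≤ 1 / (j:ℝ)^2 :=
      one_div_le_one_div_of_le (by linarith) (by linarith)
    simpa [hj] using this

private lemma aux_tendsto_symbol' (a : ℤ) :
    Tendsto (fun n : ℕ => (n : ℝ) ^ 2 * (2 - 2 * Real.cos (2 * Real.pi * (a : ℝ) / (n : ℝ))))
      atTop (nhds (4 * Real.pi ^ 2 * (a : ℝ) ^ 2)) := by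
  rcases eq_or_ne a 0 with rfl | ha
  · simp only [Int.cast_zero, mul_zero, zero_div, Real.cos_zero, ne_eq, mul_eq_zero]
    norm_num
  have ha' : (a : ℝ) ≠ 0 := Int.cast_ne_zero.2 ha
  set u : ℕ → ℝ := fun n => Real.pi * a / (n : ℝ) with hu_def
  have hu : Tendsto u atTop (nhdsWithin 0 {x | x ≠ 0}) := by
    rw [tendsto_nhdsWithin_iff]
    constructor
    · exact tendsto_const_div_atTop_nhds_zero_nat _
    · filter_upwards [eventually_ge_atTop 1] with n hn
      have hn' : (n : ℝ) ≠ 0 := by positivity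
      exact div_ne_zero (mul_ne_zero Real.pi_ne_zero ha') hn'
  have hslope : Tendsto (fun x : ℝ => Real.sin x / x) (nhdsWithin 0 {x | x ≠ 0}) (nhds 1) := by
    have h := (Real.hasDerivAt_sin 0)
    rw [hasDerivAt_iff_tendsto_slope] at h
    simp only [Real.cos_zero] at h
    refine h.congr' ?_
    filter_upwards [self_mem_nhdsWithin] with x hx
    simp [slope_def_field, hx]
  have hcomp : Tendsto (fun n => Real.sin (u n) / u n) atTop (nhds 1) := hslope.comp hu
  have hsq : Tendsto (fun n => 4 * Real.pi ^ 2 * (a:ℝ)^2 * (Real.sin (u n) / u n) ^ 2) atTop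
      (nhds (4 * Real.pi ^ 2 * (a:ℝ)^2)) := by
    have := (hcomp.pow 2).const_mul (4 * Real.pi ^ 2 * (a:ℝ)^2)
    simpa using this
  refine hsq.congr' ?_
  filter_upwards [eventually_ge_atTop 1] with n hn
  have hn' : (n : ℝ) ≠ 0 := by positivity
  have hune : u n ≠ 0 := div_ne_zero (mul_ne_zero Real.pi_ne_zero ha') hn'
  have hcos : Real.cos (2 * Real.pi * (a:ℝ) / (n:ℝ)) = 1 - 2 * Real.sin (u n) ^ 2 := by
    have h2u : 2 * Real.pi * (a:ℝ) / (n:ℝ) = 2 * u n := by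
      simp only [hu_def]; ring
    rw [h2u, Real.cos_two_mul, Real.cos_sq']
    ring
  rw [hcos]
  simp only [hu_def] at hune ⊢
  field_simp
  ring

private lemma aux_lattice_lower' (n : ℕ) (a : ℤ) (hn : 0 < (n:ℝ))
    (h1 : -(n:ℝ)/2 < (a:ℝ)) (h2 : (a:ℝ) ≤ (n:ℝ)/2) :
    ((a:ℝ))^2 ≤ (n:ℝ)^2 * (2 - 2*Real.cos (2*Real.pi*(a:ℝ)/(n:ℝ))) := by
  set θ : ℝ := 2*Real.pi*(a:ℝ)/(n:ℝ) with hθ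
  have hapos : |(a:ℝ)| ≤ (n:ℝ)/2 := abs_le.2 ⟨by linarith, h2⟩
  have habs : |θ| ≤ Real.pi := by
    have hθabs : |θ| = 2*Real.pi*|(a:ℝ)|/(n:ℝ) := by
      rw [hθ, abs_div, abs_mul, abs_mul, abs_of_pos Real.pi_pos, abs_of_pos hn]
      norm_num
    rw [hθabs, div_le_iff₀ hn]
    nlinarith [Real.pi_pos]
  have hcos := Real.cos_le_one_sub_mul_cos_sq habs
  have h5 : 2*(2/Real.pi^2*θ^2) ≤ 2 - 2*Real.cos θ := by linarith
  have hθ2 : θ^2 = 4*Real.pi^2*(a:ℝ)^2/(n:ℝ)^2 := by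
    rw [hθ]; field_simp; ring
  have h6 : (n:ℝ)^2*(2*(2/Real.pi^2*θ^2)) = 16*(a:ℝ)^2 := by
    rw [hθ2]; field_simp [Real.pi_ne_zero]; ring
  nlinarith [mul_le_mul_of_nonneg_left h5 (sq_nonneg (n:ℝ)), sq_nonneg (a:ℝ)]

private lemma aux_g_nonneg' (s : ℝ) (hs : 0 < s) (l : ℝ) (hl : 0 < l) :
    0 ≤ (1 - Real.exp (-(l * s))) / l - 1 / (l + 1 / s) := by
  have hE : Real.exp (-(l*s)) * (l*s+1) ≤ 1 := by
    have hE1 : Real.exp (-(l*s)) * Real.exp (l*s) = 1 := by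
      rw [← Real.exp_add]; simp
    nlinarith [Real.add_one_le_exp (l*s), Real.exp_pos (-(l*s))]
  rw [sub_nonneg, show (1:ℝ)/(l+1/s) = s/(l*s+1) by field_simp,
    div_le_div_iff₀ (by positivity) hl]
  nlinarith [hE]

private lemma aux_g_le' (s : ℝ) (hs : 0 < s) (l : ℝ) (hl : 0 < l) :
    (1 - Real.exp (-(l * s))) / l - 1 / (l + 1 / s) ≤ 1 / (s * l ^ 2) := by
  have hE : 0 < Real.exp (-(l*s)) := Real.exp_pos _
  have h1 : (1 - Real.exp (-(l*s)))/l ≤ 1/l := by gcongr; linarith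
  have h2 : 1/l - 1/(l+1/s) = (1/s) / (l*(l+1/s)) := by field_simp; ring
  have h3 : (1/s) / (l*(l+1/s)) ≤ 1/(s*l^2) := by
    rw [div_le_div_iff₀ (by positivity) (by positivity)]
    have key : 1/s*(s*l^2) = l^2 := by field_simp
    have h4 : 0 ≤ l * (1/s) := by positivity
    nlinarith
  linarith

set_option maxHeartbeats 1000000 in
/-- ℓ² convergence of the Fourier coefficients of the square-root covariances of the
lattice fields `X_s^{h,ε}` (mesh `ε = 1/n`) to those of the continuum field `X_s^{h,0}`:
`Σ_{j ∈ ℤ²} (q̂ⁿ(j) − q̂⁰(j))² → 0` as `n → ∞`. -/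
theorem fourier_sqrt_covariance_l2_convergence (s m : ℝ) (hs : 0 < s) (hm : 0 < m) :
    let g : ℝ → ℝ := fun lam => (1 - Real.exp (-(lam * s))) / lam - 1 / (lam + 1 / s)
    let qn : ℕ → ℤ × ℤ → ℝ := fun n j =>
      if (-(n : ℝ) / 2 < (j.1 : ℝ) ∧ (j.1 : ℝ) ≤ (n : ℝ) / 2) ∧
          (-(n : ℝ) / 2 < (j.2 : ℝ) ∧ (j.2 : ℝ) ≤ (n : ℝ) / 2) then
        Real.sqrt (g ((n : ℝ) ^ 2 *
          ((2 - 2 * Real.cos (2 * Real.pi * (j.1 : ℝ) / (n : ℝ)))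
            + (2 - 2 * Real.cos (2 * Real.pi * (j.2 : ℝ) / (n : ℝ)))) + m ^ 2))
      else 0
    let q0 : ℤ × ℤ → ℝ := fun j =>
      Real.sqrt (g (4 * Real.pi ^ 2 * ((j.1 : ℝ) ^ 2 + (j.2 : ℝ) ^ 2) + m ^ 2))
    Tendsto (fun n : ℕ => ∑' j : ℤ × ℤ, (qn n j - q0 j) ^ 2) atTop (nhds 0) := by
  intro g qn q0
  have hg_def : g = fun lam => (1 - Real.exp (-(lam * s))) / lam - 1 / (lam + 1 / s) := rfl
  have hqn_def : qn = fun (n : ℕ) (j : ℤ × ℤ) =>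
      if (-(n : ℝ) / 2 < (j.1 : ℝ) ∧ (j.1 : ℝ) ≤ (n : ℝ) / 2) ∧
          (-(n : ℝ) / 2 < (j.2 : ℝ) ∧ (j.2 : ℝ) ≤ (n : ℝ) / 2) then
        Real.sqrt (g ((n : ℝ) ^ 2 *
          ((2 - 2 * Real.cos (2 * Real.pi * (j.1 : ℝ) / (n : ℝ)))
            + (2 - 2 * Real.cos (2 * Real.pi * (j.2 : ℝ) / (n : ℝ)))) + m ^ 2))
      else 0 := rfl
  have hq0_def : q0 = fun (j : ℤ × ℤ) =>
      Real.sqrt (g (4 * Real.pi ^ 2 * ((j.1 : ℝ) ^ 2 + (j.2 : ℝ) ^ 2) + m ^ 2)) := rfl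
  clear_value g qn q0
  have hπ := Real.pi_pos
  have hg0 : ∀ l : ℝ, 0 < l → 0 ≤ g l := by rw [hg_def]; exact fun l hl => aux_g_nonneg' s hs l hl
  have hg1 : ∀ l : ℝ, 0 < l → g l ≤ 1 / (s * l ^ 2) := by rw [hg_def]; exact fun l hl => aux_g_le' s hs l hl
  have hc : 0 < m ^ 2 / 2 := by positivity
  set B : ℤ × ℤ → ℝ :=
    fun j => 4 / s * (1 / ((j.1 : ℝ) ^ 2 + m ^ 2 / 2) * (1 / ((j.2 : ℝ) ^ 2 + m ^ 2 / 2)))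
    with hB_def
  clear_value B
  have hBsum : Summable B := by
    rw [hB_def]
    have h := (aux_summable_int' hc).mul_of_nonneg (aux_summable_int' hc)
      (fun _ => by positivity) (fun _ => by positivity)
    exact h.mul_left (4 / s)
  -- uniform domination
  have hbound : ∀ (n : ℕ) (j : ℤ × ℤ), ‖(qn n j - q0 j) ^ 2‖ ≤ B j := by
    intro n j
    set L : ℝ := 4 * Real.pi ^ 2 * ((j.1 : ℝ) ^ 2 + (j.2 : ℝ) ^ 2) + m ^ 2 with hL_def
    clear_value L
    have hL : 0 < L := by rw [hL_def]; positivity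
    set D : ℝ := (j.1 : ℝ) ^ 2 + (j.2 : ℝ) ^ 2 + m ^ 2 with hD_def
    clear_value D
    have hD : 0 < D := by rw [hD_def]; positivity
    have hq0le : q0 j ^ 2 ≤ 1 / (s * D ^ 2) := by
      have hq0sq : q0 j ^ 2 = g L := by
        simp only [hq0_def]
        rw [hL_def]
        exact Real.sq_sqrt (hg0 _ (hL_def ▸ hL))
      rw [hq0sq]
      refine (hg1 L hL).trans ?_
      refine one_div_le_one_div_of_le (by positivity) ?_
      have hpi1 : (1:ℝ) ≤ 4 * Real.pi ^ 2 := by nlinarith [Real.pi_gt_three]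
      have hDL : D ≤ L := by
        rw [hD_def, hL_def]
        nlinarith [mul_le_mul_of_nonneg_right hpi1
          (add_nonneg (sq_nonneg (j.1 : ℝ)) (sq_nonneg (j.2 : ℝ)))]
      exact mul_le_mul_of_nonneg_left (by nlinarith) hs.le
    have hqnle : qn n j ^ 2 ≤ 1 / (s * D ^ 2) := by
      simp only [hqn_def]
      split_ifs with hw
      · have hn : 0 < (n : ℝ) := by
          rcases Nat.eq_zero_or_pos n with rfl | h
          · exfalso
            obtain ⟨⟨ha, hb⟩, -⟩ := hw
            norm_num at ha hb
            linarith
          · exact_mod_cast h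
        have h1 := aux_lattice_lower' n j.1 hn hw.1.1 hw.1.2
        have h2 := aux_lattice_lower' n j.2 hn hw.2.1 hw.2.2
        set Λ : ℝ := (n : ℝ) ^ 2 *
          ((2 - 2 * Real.cos (2 * Real.pi * (j.1 : ℝ) / (n : ℝ)))
            + (2 - 2 * Real.cos (2 * Real.pi * (j.2 : ℝ) / (n : ℝ)))) + m ^ 2 with hΛ_def
        clear_value Λ
        have hDΛ : D ≤ Λ := by
          rw [hD_def, hΛ_def]; nlinarith [h1, h2]
        have hΛpos : 0 < Λ := lt_of_lt_of_le hD hDΛ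
        rw [Real.sq_sqrt (hg0 _ hΛpos)]
        refine (hg1 _ hΛpos).trans ?_
        refine one_div_le_one_div_of_le (by positivity) ?_
        exact mul_le_mul_of_nonneg_left (by nlinarith) hs.le
      · norm_num
        positivity
    have hfinal : 4 * (1 / (s * D ^ 2)) ≤ B j := by
      rw [hB_def]
      simp only
      set a : ℝ := (j.1 : ℝ) ^ 2 + m ^ 2 / 2 with ha_def
      clear_value a
      set b : ℝ := (j.2 : ℝ) ^ 2 + m ^ 2 / 2 with hb_def
      clear_value b
      have hapos : 0 < a := by rw [ha_def]; positivity
      have hbpos : 0 < b := by rw [hb_def]; positivity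
      have hab : 0 < a * b := mul_pos hapos hbpos
      have h4 : a * b ≤ D ^ 2 := by
        have hDab : D = a + b := by rw [hD_def, ha_def, hb_def]; ring
        nlinarith [sq_nonneg (a - b), sq_nonneg (a + b)]
      have heq : 4 * (1 / (s * D ^ 2)) = 4 / s * (1 / D ^ 2) := by
        field_simp
      rw [heq]
      have h5 : 1 / D ^ 2 ≤ 1 / (a * b) := one_div_le_one_div_of_le hab h4
      have h6 : (1:ℝ) / (a * b) = 1 / a * (1 / b) := by field_simp
      have h7 : 0 ≤ 4 / s := by positivity
      calc 4 / s * (1 / D ^ 2) ≤ 4 / s * (1 / (a * b)) := by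
            exact mul_le_mul_of_nonneg_left h5 h7
        _ = 4 / s * (1 / a * (1 / b)) := by rw [h6]
    have habs : ‖(qn n j - q0 j) ^ 2‖ = (qn n j - q0 j) ^ 2 := by
      rw [Real.norm_eq_abs, abs_of_nonneg (sq_nonneg _)]
    rw [habs]
    nlinarith [sq_nonneg (qn n j + q0 j), hq0le, hqnle, hfinal]
  -- pointwise convergence
  have hpt : ∀ j : ℤ × ℤ, Tendsto (fun n : ℕ => (qn n j - q0 j) ^ 2) atTop (nhds 0) := by
    intro j
    set L : ℝ := 4 * Real.pi ^ 2 * ((j.1 : ℝ) ^ 2 + (j.2 : ℝ) ^ 2) + m ^ 2 with hL_def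
    clear_value L
    have hL : 0 < L := by rw [hL_def]; positivity
    have hlam : Tendsto (fun n : ℕ => (n : ℝ) ^ 2 *
        ((2 - 2 * Real.cos (2 * Real.pi * (j.1 : ℝ) / (n : ℝ)))
          + (2 - 2 * Real.cos (2 * Real.pi * (j.2 : ℝ) / (n : ℝ)))) + m ^ 2)
        atTop (nhds L) := by
      have h12 := ((aux_tendsto_symbol' j.1).add (aux_tendsto_symbol' j.2)).add_const (m ^ 2)
      have hLeq : L = 4 * Real.pi ^ 2 * (j.1 : ℝ) ^ 2 + 4 * Real.pi ^ 2 * (j.2 : ℝ) ^ 2 + m ^ 2 := by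
        rw [hL_def]; ring
      rw [hLeq]
      exact Tendsto.congr (fun n => by ring) h12
    have hcontg : ContinuousAt g L := by
      rw [hg_def]
      apply ContinuousAt.sub
      · exact ContinuousAt.div (by fun_prop) continuousAt_id hL.ne'
      · exact ContinuousAt.div continuousAt_const (by fun_prop)
          (by positivity : (0:ℝ) < L + 1 / s).ne'
    have hq0' : Tendsto (fun n : ℕ => Real.sqrt (g ((n : ℝ) ^ 2 *
        ((2 - 2 * Real.cos (2 * Real.pi * (j.1 : ℝ) / (n : ℝ)))
          + (2 - 2 * Real.cos (2 * Real.pi * (j.2 : ℝ) / (n : ℝ)))) + m ^ 2)))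
        atTop (nhds (q0 j)) := by
      have h := (Real.continuous_sqrt.continuousAt.comp hcontg).tendsto.comp hlam
      rw [hL_def] at h
      simpa [hq0_def, Function.comp_def] using h
    have hq : Tendsto (fun n : ℕ => qn n j) atTop (nhds (q0 j)) := by
      refine hq0'.congr' ?_
      filter_upwards [eventually_ge_atTop (2 * j.1.natAbs + 2 * j.2.natAbs + 1)] with n hn
      have hcast : (2 * (j.1.natAbs : ℝ) + 2 * (j.2.natAbs : ℝ) + 1) ≤ (n : ℝ) := by
        exact_mod_cast hn
      have ha1 : (j.1.natAbs : ℝ) = |(j.1 : ℝ)| := by rw [Nat.cast_natAbs, Int.cast_abs]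
      have ha2 : (j.2.natAbs : ℝ) = |(j.2 : ℝ)| := by rw [Nat.cast_natAbs, Int.cast_abs]
      have hj1a := le_abs_self (j.1 : ℝ)
      have hj1b := neg_abs_le (j.1 : ℝ)
      have hj2a := le_abs_self (j.2 : ℝ)
      have hj2b := neg_abs_le (j.2 : ℝ)
      have hna1 : (0:ℝ) ≤ (j.1.natAbs : ℝ) := by positivity
      have hna2 : (0:ℝ) ≤ (j.2.natAbs : ℝ) := by positivity
      simp only [hqn_def]
      rw [if_pos]
      refine ⟨⟨by rw [← ha1] at hj1b; linarith, by rw [← ha1] at hj1a; linarith⟩,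
        ⟨by rw [← ha2] at hj2b; linarith, by rw [← ha2] at hj2a; linarith⟩⟩
    have h := (hq.sub (tendsto_const_nhds : Tendsto _ atTop (nhds (q0 j)))).pow 2
    simpa using h
  have hfin := tendsto_tsum_of_dominated_convergence
    (f := fun (n : ℕ) (j : ℤ × ℤ) => (qn n j - q0 j) ^ 2)
    (g := fun _ : ℤ × ℤ => (0 : ℝ)) hBsum hpt (Eventually.of_forall hbound)
  simpa using hfin
end

section
/- Let A be a real symmetric positive definite N×N matrix and let s > 0. Then the matrix A^{−1}(I − exp(−sA)) − (A + s^{−1} I)^{−1} is symmetric positive definite, where exp denotes the matrix exponential. -/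
open Matrix

/-- The scalar inequality: for `λ, s > 0`, `λ⁻¹ (1 − e^{−sλ}) − (λ + s⁻¹)⁻¹ > 0`. -/
lemma gs_scalar_pos {lam s : ℝ} (hl : 0 < lam) (hs : 0 < s) :
    0 < lam⁻¹ * (1 - Real.exp (-(s * lam))) - (lam + s⁻¹)⁻¹ := by
  have ht : 0 < s * lam := mul_pos hs hl
  have hexp : s * lam + 1 < Real.exp (s * lam) := by
    have := Real.add_one_lt_exp (x := s * lam) ht.ne'
    linarith
  have key : (s * lam + 1) * Real.exp (-(s * lam)) < 1 := by
    rw [Real.exp_neg]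
    rw [mul_inv_lt_iff₀ (Real.exp_pos _), one_mul]
    exact hexp
  have h1 : (lam + s⁻¹)⁻¹ = s / (s * lam + 1) := by
    have hsne : s ≠ 0 := hs.ne'
    have hd : s * lam + 1 ≠ 0 := by positivity
    have hd2 : lam + s⁻¹ ≠ 0 := by positivity
    field_simp
  have h2 : lam⁻¹ * (1 - Real.exp (-(s * lam))) = (1 - Real.exp (-(s * lam))) / lam := by
    rw [div_eq_inv_mul]
  rw [h1, h2, sub_pos, div_lt_div_iff₀ (by positivity) hl]
  nlinarith [key, Real.exp_pos (-(s * lam))]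

/-- Positive definiteness is preserved under conjugation `U * D * Uᴴ` by a matrix with
`U * Uᴴ = 1` and `Uᴴ * U = 1`. -/
lemma posDef_conj_of_unitary {n : Type*} [Fintype n] [DecidableEq n]
    {U D : Matrix n n ℝ} (hU1 : U * star U = 1)
    (hD : D.PosDef) : (U * D * star U).PosDef := by
  refine Matrix.PosDef.of_dotProduct_mulVec_pos ?_ ?_
  · show (U * D * star U)ᴴ = U * D * star U
    simp only [Matrix.star_eq_conjTranspose, conjTranspose_mul, conjTranspose_conjTranspose,
      hD.1.eq, mul_assoc]
  · intro x hx
    have h1 : star U *ᵥ x ≠ 0 := by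
      intro h
      apply hx
      have h2 : U *ᵥ (star U *ᵥ x) = U *ᵥ 0 := congrArg _ h
      rwa [mulVec_mulVec, hU1, one_mulVec, mulVec_zero] at h2
    have := hD.dotProduct_mulVec_pos h1
    have hrw : U * D * star U = (star U)ᴴ * D * star U := by
      simp only [Matrix.star_eq_conjTranspose, conjTranspose_conjTranspose]
    rw [hrw]
    simpa only [star_mulVec, dotProduct_mulVec, vecMul_vecMul] using this

/-- For a real symmetric positive definite `N×N` matrix `A` and `s > 0`, the matrix
`A⁻¹(I − exp(−sA)) − (A + s⁻¹ I)⁻¹` is symmetric positive definite. -/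
theorem gs_matrix_posDef
    (N : ℕ) (A : Matrix (Fin N) (Fin N) ℝ) (hA : A.IsSymm) (hApos : A.PosDef)
    (s : ℝ) (hs : 0 < s) :
    (A⁻¹ * (1 - NormedSpace.exp (-(s • A))) - (A + s⁻¹ • (1 : Matrix (Fin N) (Fin N) ℝ))⁻¹).IsSymm ∧
    (A⁻¹ * (1 - NormedSpace.exp (-(s • A))) - (A + s⁻¹ • (1 : Matrix (Fin N) (Fin N) ℝ))⁻¹).PosDef := by
  have hH : A.IsHermitian := hApos.1
  set v : Fin N → ℝ := hH.eigenvalues with hv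
  set U : Matrix (Fin N) (Fin N) ℝ := (hH.eigenvectorUnitary : Matrix (Fin N) (Fin N) ℝ) with hUdef
  have hU1 : U * star U = 1 := mem_unitaryGroup_iff.mp (hH.eigenvectorUnitary).2
  have hU2 : star U * U = 1 := mem_unitaryGroup_iff'.mp (hH.eigenvectorUnitary).2
  have hvpos : ∀ i, 0 < v i := hApos.eigenvalues_pos
  set C : (Fin N → ℝ) → Matrix (Fin N) (Fin N) ℝ :=
    fun d => U * Matrix.diagonal d * star U with hC
  have hCmul : ∀ d e, C d * C e = C (d * e) := by
    intro d e
    simp only [hC]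
    calc U * Matrix.diagonal d * star U * (U * Matrix.diagonal e * star U)
        = U * Matrix.diagonal d * (star U * U) * Matrix.diagonal e * star U := by
          simp only [mul_assoc]
      _ = U * (Matrix.diagonal d * Matrix.diagonal e) * star U := by
          rw [hU2]; simp only [mul_one, mul_assoc]
      _ = U * Matrix.diagonal (d * e) * star U := by rw [diagonal_mul_diagonal]; rfl
  have hCone : C 1 = 1 := by
    have hd1 : Matrix.diagonal (1 : Fin N → ℝ) = 1 := Matrix.diagonal_one
    simp only [hC, hd1, mul_one, hU1]
  have hCsub : ∀ d e, C d - C e = C (d - e) := by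
    intro d e
    have hde : Matrix.diagonal (d - e) = Matrix.diagonal d - Matrix.diagonal e := by
      rw [Matrix.diagonal_sub]
      rfl
    simp only [hC]
    rw [hde, mul_sub, sub_mul]
  have hCsmul : ∀ (c : ℝ) d, c • C d = C (c • d) := by
    intro c d
    simp only [hC]
    rw [Matrix.diagonal_smul, mul_smul_comm, smul_mul_assoc]
  have hCneg : ∀ d, -C d = C (-d) := by
    intro d
    have hdn : Matrix.diagonal (-d) = -Matrix.diagonal d := by
      rw [Matrix.diagonal_neg]
      rfl
    simp only [hC]
    rw [hdn, mul_neg, neg_mul]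
  have hCadd : ∀ d e, C d + C e = C (d + e) := by
    intro d e
    have hda : Matrix.diagonal (d + e) = Matrix.diagonal d + Matrix.diagonal e := by
      rw [Matrix.diagonal_add]
      rfl
    simp only [hC]
    rw [hda, mul_add, add_mul]
  have hAeq : A = C v := by
    have := hH.spectral_theorem
    simpa [hC] using this
  have hCinv : ∀ d, (∀ i, d i ≠ 0) → (C d)⁻¹ = C d⁻¹ := by
    intro d hd
    apply inv_eq_right_inv
    rw [hCmul]
    have : d * d⁻¹ = 1 := by
      funext i
      simp [mul_inv_cancel₀ (hd i)]
    rw [this, hCone]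
  have hUunit : IsUnit U := ⟨⟨U, star U, hU1, hU2⟩, rfl⟩
  have hUinv : U⁻¹ = star U := inv_eq_right_inv hU1
  have hCexp : ∀ d, NormedSpace.exp (C d) = C (fun i => Real.exp (d i)) := by
    intro d
    simp only [hC, ← hUinv]
    rw [Matrix.exp_conj U (Matrix.diagonal d) hUunit, Matrix.exp_diagonal]
    congr 1
    congr 1
    funext i
    rw [Pi.exp_def, Real.exp_eq_exp_ℝ]
  -- rewrite each piece
  have hexp : NormedSpace.exp (-(s • A)) = C (fun i => Real.exp (-(s * v i))) := by
    rw [hAeq, hCsmul, hCneg, hCexp]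
    congr 1
  have hAinv : A⁻¹ = C v⁻¹ := by
    rw [hAeq, hCinv v (fun i => (hvpos i).ne')]
  have hsum : A + s⁻¹ • (1 : Matrix (Fin N) (Fin N) ℝ) = C (v + fun _ => s⁻¹) := by
    have hv1 : (v + fun _ => s⁻¹) = v + s⁻¹ • (1 : Fin N → ℝ) := by
      funext i
      simp
    rw [hAeq, hv1, ← hCadd, ← hCsmul, hCone]
  have hsuminv : (A + s⁻¹ • (1 : Matrix (Fin N) (Fin N) ℝ))⁻¹
      = C (fun i => (v i + s⁻¹)⁻¹) := by
    rw [hsum, hCinv (v + fun _ => s⁻¹) (fun i => (add_pos (hvpos i) (inv_pos.mpr hs)).ne')]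
    congr 1
  set g : Fin N → ℝ := fun i => (v i)⁻¹ * (1 - Real.exp (-(s * v i))) - (v i + s⁻¹)⁻¹ with hg
  have hmain : A⁻¹ * (1 - NormedSpace.exp (-(s • A)))
      - (A + s⁻¹ • (1 : Matrix (Fin N) (Fin N) ℝ))⁻¹ = C g := by
    rw [hAinv, hexp, hsuminv, ← hCone, hCsub, hCmul, hCsub]
    congr 1
  have hgpos : ∀ i, 0 < g i := fun i => gs_scalar_pos (hvpos i) hs
  have hDpos : (Matrix.diagonal g).PosDef := Matrix.PosDef.diagonal hgpos
  have hfinal : (C g).PosDef := posDef_conj_of_unitary hU1 hDpos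
  rw [hmain]
  refine ⟨?_, hfinal⟩
  rw [Matrix.IsSymm, ← Matrix.conjTranspose_eq_transpose_of_trivial]
  exact hfinal.1
end

section
/- Let (S, d) be a metric space, let f, g : S → ℝ and set h = f − g. Let ρ > 0, R > 0 with 2ρ < R, let m, λ ∈ ℝ, and let x, y ∈ S. Assume: (i) for all u, v ∈ S, if g(u) ≥ m − λ and g(v) ≥ m − λ then d(u,v) ≤ ρ/2 or d(u,v) ≥ R; (ii) y lies in the closed ball of radius 2ρ around x and g(z) ≤ g(y) for every z in that ball; (iii) f(z) ≤ f(x) for every z in the closed ball of radius ρ around x; (iv) g(x) ≥ m − λ. Then: d(x, y) ≤ ρ/2; g(z) ≤ g(y) for every z in the closed ball of radius ρ around y; and 0 ≤ f(x) − f(y) ≤ h(x) − h(y). -/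
/-- Deterministic core of the correspondence between local maxima of `f = g + h` and of
`g`: under the near-maxima separation hypothesis for `g`, if `y` maximises `g` on the ball
of radius `2ρ` around `x`, `x` is a `ρ`-local maximum of `f`, and `g(x) ≥ m − λ`, then
`d(x,y) ≤ ρ/2`, `y` is a `ρ`-local maximum of `g`, and `0 ≤ f(x) − f(y) ≤ h(x) − h(y)`. -/
theorem local_maxima_correspondence
    {S : Type*} [MetricSpace S] (f g h : S → ℝ) (hh : h = f - g)
    (ρ R : ℝ) (hρ : 0 < ρ) (hR : 0 < R) (hρR : 2 * ρ < R)
    (m lam : ℝ) (x y : S)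
    (hsep : ∀ u v : S, m - lam ≤ g u → m - lam ≤ g v →
      dist u v ≤ ρ / 2 ∨ R ≤ dist u v)
    (hy_mem : y ∈ Metric.closedBall x (2 * ρ))
    (hy_max : ∀ z ∈ Metric.closedBall x (2 * ρ), g z ≤ g y)
    (hx_max : ∀ z ∈ Metric.closedBall x ρ, f z ≤ f x)
    (hgx : m - lam ≤ g x) :
    dist x y ≤ ρ / 2 ∧
    (∀ z ∈ Metric.closedBall y ρ, g z ≤ g y) ∧
    (0 ≤ f x - f y ∧ f x - f y ≤ h x - h y) := by
  have hx_mem : x ∈ Metric.closedBall x (2 * ρ) := by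
    simp only [Metric.mem_closedBall, dist_self]
    linarith
  have hgy : m - lam ≤ g y := le_trans hgx (hy_max x hx_mem)
  have hdxy : dist x y ≤ ρ / 2 := by
    rcases hsep x y hgx hgy with h1 | h1
    · exact h1
    · exfalso
      have := Metric.mem_closedBall.mp hy_mem
      rw [dist_comm] at this
      linarith
  refine ⟨hdxy, ?_, ?_⟩
  · intro z hz
    apply hy_max
    have hz' := Metric.mem_closedBall.mp hz
    have : dist z x ≤ dist z y + dist y x := dist_triangle z y x
    rw [Metric.mem_closedBall]
    rw [dist_comm] at hdxy
    linarith
  · have hy_ball : y ∈ Metric.closedBall x ρ := by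
      rw [Metric.mem_closedBall, dist_comm]
      linarith
    have h1 : f y ≤ f x := hx_max y hy_ball
    have h2 : g x ≤ g y := hy_max x hx_mem
    subst hh
    simp only [Pi.sub_apply]
    constructor <;> linarith
end
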